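/- Let f(z) = ∑_{n≥0} a_n z^n be analytic on the unit disc with |f(z)| ≤ 1 there. Then for all r = |z| ≤ 1/5: |f(z) - f(0)| + |f(0)| + ∑_{n≥1} |a_n| r^n + (1/(1+|a_0|) + r/(1-r)) ∑_{n≥1} |a_n|^2 r^{2n} ≤ 1. -/

import Mathlib

open Metric Complex Finset

open Metric Complex Finset

-- Möbius map bound: |1 - conj a * ζ|² - |ζ - a|² = (1-|a|²)(1-|ζ|²)
lemma mobius_normSq (A ζ : ℂ) :
    Complex.normSq (1 - (starRingEnd ℂ) A * ζ) - Complex.normSq (ζ - A)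
      = (1 - Complex.normSq A) * (1 - Complex.normSq ζ) := by
  simp only [Complex.normSq_apply, Complex.sub_re, Complex.sub_im, Complex.one_re, Complex.one_im,
    Complex.mul_re, Complex.mul_im, Complex.conj_re, Complex.conj_im]
  ring

lemma mobius_denom_ne {A ζ : ℂ} (ha : ‖A‖ < 1) (hζ : ‖ζ‖ ≤ 1) :
    1 - (starRingEnd ℂ) A * ζ ≠ 0 := by
  intro h
  have h1 : ‖(starRingEnd ℂ) A * ζ‖ < 1 := by
    rw [norm_mul, Complex.norm_conj]
    calc ‖A‖ * ‖ζ‖ ≤ ‖A‖ * 1 :=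
          mul_le_mul_of_nonneg_left hζ (norm_nonneg _)
      _ < 1 := by simpa using ha
  have : (starRingEnd ℂ) A * ζ = 1 := by linear_combination -h
  rw [this] at h1; simp at h1

lemma mobius_abs_le {A ζ : ℂ} (ha : ‖A‖ < 1) (hζ : ‖ζ‖ ≤ 1) :
    ‖(ζ - A) / (1 - (starRingEnd ℂ) A * ζ)‖ ≤ 1 := by
  have hne := mobius_denom_ne ha hζ
  rw [norm_div, div_le_one (by simpa [norm_pos_iff] using hne)]
  have h1 : Complex.normSq ζ ≤ 1 := by
    rw [← Complex.sq_norm]; nlinarith [norm_nonneg ζ]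
  have h2 : Complex.normSq A ≤ 1 := by
    rw [← Complex.sq_norm]; nlinarith [norm_nonneg A]
  have := mobius_normSq A ζ
  rw [Complex.norm_def, Complex.norm_def]
  apply Real.sqrt_le_sqrt
  nlinarith

lemma hasSum_zero_pt (c : ℕ → ℂ) : HasSum (fun m => c m * (0:ℂ) ^ m) (c 0) := by
  have : (fun m => c m * (0:ℂ) ^ m) = (fun m => if m = 0 then c 0 else 0) := by
    funext m
    rcases Nat.eq_zero_or_pos m with h | h
    · simp [h]
    · simp [pow_eq_zero_iff, Nat.pos_iff_ne_zero.mp h]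
  rw [this]
  exact hasSum_ite_eq 0 (c 0)

lemma core_lemma (c : ℕ → ℂ) (h : ℂ → ℂ)
    (hs : ∀ w ∈ ball (0:ℂ) 1, HasSum (fun m => c m * w ^ m) (h w))
    (hbd : ∀ w ∈ ball (0:ℂ) 1, ‖h w‖ ≤ 1) :
    ‖c 1‖ ≤ 1 - ‖c 0‖ ^ 2 := by
  have h0mem : (0:ℂ) ∈ ball (0:ℂ) 1 := by simp
  have hh0 : h 0 = c 0 := ((hs 0 h0mem).unique (hasSum_zero_pt c))
  -- power series
  set q : FormalMultilinearSeries ℂ ℂ ℂ := FormalMultilinearSeries.ofScalars ℂ c with hq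
  have hqn : ∀ n, ‖q n‖ = ‖c n‖ := by
    intro n
    rw [hq]; exact FormalMultilinearSeries.ofScalars_norm ℂ c n
  have hrad : 1 ≤ q.radius := by
    apply ENNReal.le_of_forall_nnreal_lt
    intro r hr
    have hr1 : (r : ℝ) < 1 := by exact_mod_cast hr
    have hmem : ((r : ℝ) : ℂ) ∈ ball (0:ℂ) 1 := by
      simp [Complex.norm_of_nonneg r.coe_nonneg, hr1, _root_.abs_of_nonneg r.coe_nonneg]
    have hsum : Summable (fun n => ‖c n * ((r : ℝ) : ℂ) ^ n‖) :=
      summable_norm_iff.mpr (hs _ hmem).summable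
    apply q.le_radius_of_summable_norm
    convert hsum using 2 with n
    rw [hqn]
    simp only [norm_mul, norm_pow, Complex.norm_real, Real.norm_eq_abs,
      _root_.abs_of_nonneg r.coe_nonneg]
  have hball : ∀ y : ℂ, y ∈ Metric.eball (0:ℂ) 1 ↔ ‖y‖ < 1 := by
    intro y
    rw [Metric.mem_eball, edist_dist, dist_zero_right, ENNReal.ofReal_lt_one]
  have hps : HasFPowerSeriesOnBall h q 0 1 := by
    refine ⟨hrad, one_pos, ?_⟩
    intro y hy
    rw [hball] at hy
    have := hs y (by simpa using hy)
    simp only [zero_add]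
    have hfun : (fun n : ℕ => q n fun _ => y) = fun m => c m * y ^ m := by
      funext n
      rw [hq, FormalMultilinearSeries.ofScalars_apply_eq, smul_eq_mul]
    rw [hfun]
    exact this
  have heball : Metric.eball (0:ℂ) 1 = ball (0:ℂ) 1 := by
    ext y; rw [hball, mem_ball, dist_zero_right]
  have hdiff : DifferentiableOn ℂ h (ball (0:ℂ) 1) := by
    have := hps.differentiableOn
    rwa [heball] at this
  have hderiv : deriv h 0 = c 1 := by
    rw [hps.hasFPowerSeriesAt.deriv]
    simp [hq, FormalMultilinearSeries.coeff, FormalMultilinearSeries.ofScalars]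
  have hc0 : ‖c 0‖ ≤ 1 := by rw [← hh0]; exact hbd 0 h0mem
  rcases eq_or_lt_of_le hc0 with heq | hlt
  · -- |c 0| = 1 : maximum modulus, h constant
    have hmax : IsMaxOn (norm ∘ h) (ball (0:ℂ) 1) 0 := by
      intro w hw
      simp only [Function.comp, Set.mem_setOf_eq, hh0]
      calc ‖h w‖ ≤ 1 := hbd w hw
        _ = ‖c 0‖ := heq.symm
        _ = ‖(c 0 : ℂ)‖ := rfl
    have heqon := Complex.eqOn_of_isPreconnected_of_isMaxOn_norm
      (convex_ball (0:ℂ) 1).isPreconnected isOpen_ball hdiff h0mem hmax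
    have : deriv h 0 = 0 := by
      have hev : h =ᶠ[nhds (0:ℂ)] (fun _ => h 0) := by
        filter_upwards [isOpen_ball.mem_nhds h0mem] with w hw
        exact heqon hw
      rw [hev.deriv_eq]
      simp
    rw [this] at hderiv
    have : ‖c 1‖ = 0 := by rw [← hderiv]; simp
    rw [this, ← heq]
    nlinarith [norm_nonneg (c 0)]
  · -- |c 0| < 1 : Schwarz lemma for Möbius ∘ h
    set A := c 0 with hA
    set φ : ℂ → ℂ := fun ζ => (ζ - A) / (1 - (starRingEnd ℂ) A * ζ) with hφ
    set g : ℂ → ℂ := fun w => φ (h w) with hg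
    have hgd : DifferentiableOn ℂ g (ball (0:ℂ) 1) := by
      intro w hw
      have h1 : DifferentiableAt ℂ h w := hdiff.differentiableAt (isOpen_ball.mem_nhds hw)
      have hne : 1 - (starRingEnd ℂ) A * (h w) ≠ 0 := mobius_denom_ne hlt (hbd w hw)
      have h2 : DifferentiableAt ℂ φ (h w) := by
        apply DifferentiableAt.div
        · fun_prop
        · fun_prop
        · exact hne
      exact (h2.comp w h1).differentiableWithinAt
    have hg0 : g 0 = 0 := by
      simp only [hg, hφ, hh0, ← hA, sub_self, zero_div]
    have hgb : ∀ w ∈ ball (0:ℂ) 1, ‖g w‖ ≤ 1 := fun w hw =>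
      mobius_abs_le hlt (hbd w hw)
    have hderivg : ‖deriv g 0‖ ≤ 1 := by
      have key : ∀ ε : ℝ, 0 < ε → ‖deriv g 0‖ ≤ 1 + ε := by
        intro ε hε
        have hmaps : Set.MapsTo g (ball (0:ℂ) 1) (ball (g 0) (1 + ε)) := by
          intro w hw
          rw [mem_ball, hg0, dist_zero_right]
          calc ‖g w‖ ≤ 1 := hgb w hw
            _ < 1 + ε := by linarith
        have := Complex.norm_deriv_le_div_of_mapsTo_ball hgd (hmaps.mono_right ball_subset_closedBall) one_pos
        simpa using this
      exact le_of_forall_pos_le_add key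
    -- chain rule
    have hhd : HasDerivAt h (c 1) 0 := by
      have := (hdiff.differentiableAt (isOpen_ball.mem_nhds h0mem)).hasDerivAt
      rwa [hderiv] at this
    have hAne : 1 - (starRingEnd ℂ) A * A ≠ 0 := mobius_denom_ne hlt hc0
    have hφd : HasDerivAt φ ((1 - (starRingEnd ℂ) A * A) / (1 - (starRingEnd ℂ) A * A) ^ 2) A := by
      have h1 : HasDerivAt (fun ζ : ℂ => ζ - A) 1 A := (hasDerivAt_id A).sub_const A
      have h2 : HasDerivAt (fun ζ : ℂ => 1 - (starRingEnd ℂ) A * ζ) (-(starRingEnd ℂ) A) A := by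
        simpa using ((hasDerivAt_id A).const_mul ((starRingEnd ℂ) A)).const_sub 1
      have := h1.div h2 hAne
      rw [show (1 * (1 - (starRingEnd ℂ) A * A) - (A - A) * -(starRingEnd ℂ) A) = 1 - (starRingEnd ℂ) A * A by ring] at this
      exact this
    have hgderiv : deriv g 0 = ((1 - (starRingEnd ℂ) A * A) / (1 - (starRingEnd ℂ) A * A) ^ 2) * c 1 := by
      have hφd' : HasDerivAt φ ((1 - (starRingEnd ℂ) A * A) / (1 - (starRingEnd ℂ) A * A) ^ 2) (h 0) := by
        rw [hh0]; exact hφd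
      have hcomp := hφd'.comp 0 hhd
      have : HasDerivAt g (((1 - (starRingEnd ℂ) A * A) / (1 - (starRingEnd ℂ) A * A) ^ 2) * c 1) 0 := by
        simpa [hg, Function.comp_def] using hcomp
      exact this.deriv
    -- conclude
    have habs : ‖(1 - (starRingEnd ℂ) A * A) / (1 - (starRingEnd ℂ) A * A) ^ 2‖
        = (1 - ‖A‖ ^ 2)⁻¹ := by
      have hAA : (starRingEnd ℂ) A * A = (Complex.normSq A : ℂ) := by
        rw [mul_comm, Complex.mul_conj]
      rw [hAA, norm_div, norm_pow]
      have h1 : ‖1 - (Complex.normSq A : ℂ)‖ = 1 - ‖A‖ ^ 2 := by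
        rw [show (1 : ℂ) - (Complex.normSq A : ℂ) = ((1 - Complex.normSq A : ℝ) : ℂ) by push_cast; ring]
        rw [Complex.norm_real, Real.norm_eq_abs, _root_.abs_of_nonneg]
        · rw [Complex.sq_norm]
        · rw [← Complex.sq_norm]; nlinarith [norm_nonneg A]
      rw [h1]
      have hpos : 0 < 1 - ‖A‖ ^ 2 := by nlinarith [norm_nonneg A]
      field_simp
    have := hderivg
    rw [hgderiv, norm_mul, habs] at this
    have hpos : 0 < 1 - ‖A‖ ^ 2 := by nlinarith [norm_nonneg A]
    rw [inv_mul_le_iff₀ hpos] at this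
    simpa using this


section Part2
variable (f : ℂ → ℂ) (a : ℕ → ℂ)

-- coefficient growth bound
lemma coeff_growth (hf : ∀ z ∈ ball (0 : ℂ) 1, HasSum (fun n => a n * z ^ n) (f z))
    {ρ : ℝ} (hρ0 : 0 ≤ ρ) (hρ1 : ρ < 1) :
    ∃ C : ℝ, ∀ k, ‖a k‖ * ρ ^ k ≤ C := by
  have hmem : ((ρ : ℝ) : ℂ) ∈ ball (0:ℂ) 1 := by
    simp [Complex.norm_real, Real.norm_eq_abs, _root_.abs_of_nonneg hρ0, hρ1]
  have hsum := (hf _ hmem).summable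
  have htend : Filter.Tendsto (fun k => ‖a k * ((ρ:ℝ):ℂ) ^ k‖) Filter.atTop (nhds 0) := by
    have := hsum.tendsto_atTop_zero
    have h2 := this.norm
    simpa using h2
  have hbdd := htend.bddAbove_range
  obtain ⟨C, hC⟩ := hbdd
  refine ⟨C, fun k => ?_⟩
  have := hC (Set.mem_range_self (f := fun k => ‖a k * ((ρ:ℝ):ℂ) ^ k‖) k)
  simpa [norm_mul, norm_pow, Complex.norm_of_nonneg hρ0, abs_of_nonneg hρ0] using this
end Part2

section Part2b
variable (f : ℂ → ℂ) (a : ℕ → ℂ)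

lemma summable_sub (hf : ∀ z ∈ ball (0 : ℂ) 1, HasSum (fun n => a n * z ^ n) (f z))
    {n : ℕ} (hn : 0 < n) {w : ℂ} (hw : ‖w‖ < 1) :
    Summable (fun m => a (n * m) * w ^ m) := by
  set t := ‖w‖ with ht
  have ht0 : 0 ≤ t := norm_nonneg w
  set u : ℝ := (t + 1) / 2 with hu
  have hu0 : 0 < u := by rw [hu]; linarith
  have hu1 : u < 1 := by rw [hu]; linarith
  have htu : t < u := by rw [hu]; linarith
  set σ : ℝ := u ^ ((n : ℝ)⁻¹) with hσ
  have hσ0 : 0 < σ := Real.rpow_pos_of_pos hu0 _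
  have hσ1 : σ < 1 := by
    apply Real.rpow_lt_one hu0.le hu1
    positivity
  have hσn : σ ^ n = u := by
    rw [hσ, ← Real.rpow_natCast (u ^ ((n:ℝ)⁻¹)) n, ← Real.rpow_mul hu0.le]
    rw [inv_mul_cancel₀ (by exact_mod_cast hn.ne')]
    exact Real.rpow_one u
  obtain ⟨C, hC⟩ := coeff_growth f a hf hσ0.le hσ1
  apply Summable.of_norm_bounded (g := fun m => C * (t / u) ^ m)
  · apply Summable.mul_left
    apply summable_geometric_of_lt_one (by positivity)
    rw [div_lt_one hu0]; exact htu
  · intro m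
    have h1 : ‖a (n * m)‖ * σ ^ (n * m) ≤ C := hC (n * m)
    have h2 : σ ^ (n * m) = u ^ m := by rw [pow_mul, hσn]
    have h3 : ‖a (n * m)‖ ≤ C / u ^ m := by
      rw [le_div_iff₀ (by positivity)]
      calc ‖a (n * m)‖ * u ^ m = ‖a (n * m)‖ * σ ^ (n * m) := by rw [h2]
        _ ≤ C := h1
    calc ‖a (n * m) * w ^ m‖ = ‖a (n * m)‖ * t ^ m := by
          rw [norm_mul, norm_pow]
      _ ≤ (C / u ^ m) * t ^ m := by
          apply mul_le_mul_of_nonneg_right h3 (by positivity)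
      _ = C * (t / u) ^ m := by rw [div_mul_eq_mul_div, mul_div_assoc, ← div_pow]

lemma coeff_bound (hf : ∀ z ∈ ball (0 : ℂ) 1, HasSum (fun n => a n * z ^ n) (f z))
    (hb : ∀ z ∈ ball (0 : ℂ) 1, ‖f z‖ ≤ 1)
    {n : ℕ} (hn : 0 < n) :
    ‖a n‖ ≤ 1 - ‖a 0‖ ^ 2 := by
  have hn0 : (n : ℂ) ≠ 0 := by exact_mod_cast hn.ne'
  set c : ℕ → ℂ := fun m => a (n * m) with hc
  set h : ℂ → ℂ := fun w => ∑' m, c m * w ^ m with hh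
  have hsummable : ∀ w ∈ ball (0:ℂ) 1, Summable (fun m => c m * w ^ m) := by
    intro w hw
    rw [mem_ball_zero_iff] at hw
    exact summable_sub f a hf hn hw
  have hs : ∀ w ∈ ball (0:ℂ) 1, HasSum (fun m => c m * w ^ m) (h w) :=
    fun w hw => (hsummable w hw).hasSum
  set ω : ℂ := Complex.exp (2 * Real.pi * Complex.I / n) with hω
  have hprim : IsPrimitiveRoot ω n := Complex.isPrimitiveRoot_exp n hn.ne'
  have habsω : ∀ j : ℕ, ‖ω ^ j‖ = 1 := by
    intro j
    rw [norm_pow]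
    have : ω = Complex.exp ((2 * Real.pi / n : ℝ) * Complex.I) := by
      rw [hω]; congr 1; push_cast; ring
    rw [this, Complex.norm_exp_ofReal_mul_I, one_pow]
  have hroot : ∀ k, (∑ j ∈ range n, (ω ^ k) ^ j) = if n ∣ k then (n:ℂ) else 0 := by
    intro k
    by_cases hd : n ∣ k
    · rw [if_pos hd]
      obtain ⟨m, rfl⟩ := hd
      have h1 : ω ^ (n * m) = 1 := by
        rw [pow_mul, hprim.pow_eq_one, one_pow]
      rw [h1]
      simp
    · rw [if_neg hd]
      have hne : ω ^ k ≠ 1 := fun h1 => hd ((hprim.pow_eq_one_iff_dvd k).mp h1)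
      rw [geom_sum_eq hne]
      have : (ω ^ k) ^ n = 1 := by
        rw [← pow_mul, mul_comm, pow_mul, hprim.pow_eq_one, one_pow]
      rw [this, sub_self, zero_div]
  have hbd : ∀ w ∈ ball (0:ℂ) 1, ‖h w‖ ≤ 1 := by
    intro w hw
    have hw' : ‖w‖ < 1 := mem_ball_zero_iff.mp hw
    obtain ⟨z, hzw⟩ := IsAlgClosed.exists_pow_nat_eq w hn
    have hzlt : ‖z‖ < 1 := by
      have h1 : ‖z‖ ^ n < 1 := by rw [← norm_pow, hzw]; exact hw'
      exact (pow_lt_one_iff_of_nonneg (norm_nonneg z) hn.ne').mp h1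
    have hSj : ∀ j ∈ range n, HasSum (fun k => a k * (ω ^ j * z) ^ k) (f (ω ^ j * z)) := by
      intro j _
      apply hf
      rw [mem_ball_zero_iff]
      show ‖_‖ < 1
      rw [norm_mul, habsω j, one_mul]; exact hzlt
    have hS := hasSum_sum hSj
    have hfun : (fun k => ∑ j ∈ range n, a k * (ω ^ j * z) ^ k)
        = fun k => if n ∣ k then (n:ℂ) * (a k * z ^ k) else 0 := by
      funext k
      have h1 : ∀ j ∈ range n, a k * (ω ^ j * z) ^ k = (a k * z ^ k) * (ω ^ k) ^ j := by
        intro j _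
        rw [mul_pow, ← pow_mul, mul_comm j k, pow_mul]
        ring
      rw [Finset.sum_congr rfl h1, ← Finset.mul_sum, hroot k]
      split <;> ring
    rw [hfun] at hS
    have hinj : Function.Injective (fun m : ℕ => n * m) := fun x y hxy =>
      Nat.eq_of_mul_eq_mul_left hn hxy
    have hsupp : ∀ k ∉ Set.range (fun m : ℕ => n * m),
        (if n ∣ k then (n:ℂ) * (a k * z ^ k) else 0) = 0 := by
      intro k hk
      rw [if_neg]
      intro hd
      obtain ⟨m, rfl⟩ := hd
      exact hk ⟨m, rfl⟩
    have hS2 := (Function.Injective.hasSum_iff hinj hsupp).mpr hS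
    have hcomp : ((fun k => if n ∣ k then (n:ℂ) * (a k * z ^ k) else 0) ∘ (fun m : ℕ => n * m))
        = fun m => (n:ℂ) * (c m * w ^ m) := by
      funext m
      simp only [Function.comp_apply, if_pos (dvd_mul_right n m)]
      rw [hc]
      congr 1
      rw [pow_mul, hzw]
    rw [hcomp] at hS2
    have hS3 := hS2.div_const (n : ℂ)
    have hS4 : HasSum (fun m => c m * w ^ m) ((∑ j ∈ range n, f (ω ^ j * z)) / n) := by
      have heq : (fun m => (n:ℂ) * (c m * w ^ m) / n) = fun m => c m * w ^ m := by
        funext m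
        rw [mul_div_cancel_left₀ _ hn0]
      rw [← heq]
      exact hS3
    have hval : h w = (∑ j ∈ range n, f (ω ^ j * z)) / n := (hs w hw).unique hS4
    rw [hval, norm_div]
    have hden : ‖(n : ℂ)‖ = (n : ℝ) := by
      rw [Complex.norm_natCast]
    rw [hden, div_le_one (by exact_mod_cast hn)]
    calc ‖∑ j ∈ range n, f (ω ^ j * z)‖
        ≤ ∑ j ∈ range n, ‖f (ω ^ j * z)‖ := by
          simpa using norm_sum_le (range n) (fun j => f (ω ^ j * z))
      _ ≤ ∑ _j ∈ range n, (1:ℝ) := by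
          apply Finset.sum_le_sum
          intro j _
          apply hb
          rw [mem_ball_zero_iff]
          show ‖_‖ < 1
          rw [norm_mul, habsω j, one_mul]; exact hzlt
      _ = n := by simp
  have := core_lemma c h hs hbd
  have hc1 : c 1 = a n := by rw [hc]; simp
  have hc0 : c 0 = a 0 := by rw [hc]; simp
  rwa [hc1, hc0] at this
end Part2b


lemma final_ineq (A r : ℝ) (hA0 : 0 ≤ A) (hA1 : A ≤ 1) (hr0 : 0 ≤ r) (hr : r ≤ 1/5) :
    A + 2 * ((1 - A^2) * (r / (1 - r))) +
      (1/(1+A) + r/(1-r)) * ((1-A^2)^2 * (r^2/(1-r^2))) ≤ 1 := by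
  have hr1 : r < 1 := by linarith
  have hd1 : (0:ℝ) < 1 - r := by linarith
  have hd2 : (0:ℝ) < 1 - r^2 := by nlinarith
  have hx0 : 0 ≤ r / (1-r) := by positivity
  have hx : r / (1-r) ≤ 1/4 := by
    rw [div_le_iff₀ hd1]; linarith
  have hy0 : 0 ≤ r^2 / (1-r^2) := by positivity
  have hy : r^2 / (1-r^2) ≤ 1/24 := by
    rw [div_le_iff₀ hd2]; nlinarith
  have hApos : (0:ℝ) < 1 + A := by linarith
  have hB0 : 0 ≤ 1/(1+A) := by positivity
  have hL0 : (0:ℝ) ≤ 1 - A^2 := by nlinarith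
  have step : A + 2 * ((1 - A^2) * (r / (1 - r))) +
      (1/(1+A) + r/(1-r)) * ((1-A^2)^2 * (r^2/(1-r^2)))
      ≤ A + 2 * ((1 - A^2) * (1/4)) + (1/(1+A) + 1/4) * ((1-A^2)^2 * (1/24)) := by
    gcongr
  refine step.trans ?_
  have hkey : 1/(1+A) * (1-A^2)^2 = (1-A)^2 * (1+A) := by
    field_simp
    ring
  nlinarith [sq_nonneg (1-A), sq_nonneg A, mul_nonneg (sub_nonneg.mpr hA1) hA0,
    mul_nonneg (mul_nonneg (sub_nonneg.mpr hA1) (sub_nonneg.mpr hA1)) hA0,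
    sq_nonneg (A*(1-A)), sq_nonneg ((1-A)*(1+A)), mul_nonneg (mul_nonneg hL0 hL0) hA0]

theorem refined_bohr_p1_one_variable
    (f : ℂ → ℂ) (a : ℕ → ℂ)
    (hf : ∀ z ∈ Metric.ball (0 : ℂ) 1, HasSum (fun n => a n * z ^ n) (f z))
    (hb : ∀ z ∈ Metric.ball (0 : ℂ) 1, ‖f z‖ ≤ 1)
    (z : ℂ) (hz : ‖z‖ ≤ 1 / 5) :
    ‖f z - f 0‖ + ‖f 0‖ +
      (∑' n : ℕ, ‖a (n + 1)‖ * (‖z‖) ^ (n + 1)) +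
      (1 / (1 + ‖a 0‖) + ‖z‖ / (1 - ‖z‖)) *
        (∑' n : ℕ, (‖a (n + 1)‖) ^ 2 * (‖z‖) ^ (2 * (n + 1))) ≤ 1 := by
  set r := ‖z‖ with hrdef
  have hr0 : 0 ≤ r := norm_nonneg z
  have hr1 : r < 1 := lt_of_le_of_lt hz (by norm_num)
  have hzmem : z ∈ ball (0:ℂ) 1 := mem_ball_zero_iff.mpr hr1
  have h0mem : (0:ℂ) ∈ ball (0:ℂ) 1 := by simp
  have hf0 : f 0 = a 0 := (hf 0 h0mem).unique (hasSum_zero_pt a)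
  set A := ‖a 0‖ with hAdef
  have hA1 : A ≤ 1 := by rw [hAdef, ← hf0]; exact hb 0 h0mem
  have hA0 : 0 ≤ A := norm_nonneg _
  set L := 1 - A^2 with hLdef
  have hL0 : 0 ≤ L := by nlinarith
  have hcoef : ∀ k : ℕ, ‖a (k+1)‖ ≤ L :=
    fun k => coeff_bound f a hf hb (Nat.succ_pos k)
  have hterm1 : ∀ k : ℕ, 0 ≤ ‖a (k+1)‖ * r ^ (k+1) :=
    fun k => mul_nonneg (norm_nonneg _) (pow_nonneg hr0 _)
  have hterm1le : ∀ k : ℕ, ‖a (k+1)‖ * r ^ (k+1) ≤ (L * r) * r ^ k := by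
    intro k
    have : (L * r) * r ^ k = L * r ^ (k+1) := by ring
    rw [this]
    exact mul_le_mul_of_nonneg_right (hcoef k) (pow_nonneg hr0 _)
  have hgeo : Summable (fun k : ℕ => (L * r) * r ^ k) :=
    (summable_geometric_of_lt_one hr0 hr1).mul_left _
  have hsum1 : Summable (fun k : ℕ => ‖a (k+1)‖ * r ^ (k+1)) :=
    Summable.of_nonneg_of_le hterm1 hterm1le hgeo
  have hS1 : (∑' k : ℕ, ‖a (k+1)‖ * r ^ (k+1)) ≤ L * (r / (1-r)) := by
    calc (∑' k : ℕ, ‖a (k+1)‖ * r ^ (k+1))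
        ≤ ∑' k : ℕ, (L * r) * r ^ k := Summable.tsum_le_tsum hterm1le hsum1 hgeo
      _ = (L * r) * (1 - r)⁻¹ := by
          rw [tsum_mul_left, tsum_geometric_of_lt_one hr0 hr1]
      _ = L * (r / (1-r)) := by rw [div_eq_mul_inv]; ring
  -- squares
  have hr2 : r^2 < 1 := by nlinarith
  have hr20 : 0 ≤ r^2 := sq_nonneg r
  have hterm2 : ∀ k : ℕ, 0 ≤ (‖a (k+1)‖)^2 * r ^ (2*(k+1)) :=
    fun k => mul_nonneg (sq_nonneg _) (pow_nonneg hr0 _)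
  have hterm2le : ∀ k : ℕ, (‖a (k+1)‖)^2 * r ^ (2*(k+1)) ≤ (L^2 * r^2) * (r^2) ^ k := by
    intro k
    have h1 : r ^ (2*(k+1)) = (r^2)^(k+1) := by rw [pow_mul]
    have h2 : (L^2 * r^2) * (r^2) ^ k = L^2 * (r^2)^(k+1) := by ring
    rw [h1, h2]
    apply mul_le_mul_of_nonneg_right _ (pow_nonneg hr20 _)
    exact pow_le_pow_left₀ (norm_nonneg _) (hcoef k) 2
  have hgeo2 : Summable (fun k : ℕ => (L^2 * r^2) * (r^2) ^ k) :=
    (summable_geometric_of_lt_one hr20 hr2).mul_left _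
  have hsum2 : Summable (fun k : ℕ => (‖a (k+1)‖)^2 * r ^ (2*(k+1))) :=
    Summable.of_nonneg_of_le hterm2 hterm2le hgeo2
  have hS2 : (∑' k : ℕ, (‖a (k+1)‖)^2 * r ^ (2*(k+1))) ≤ L^2 * (r^2 / (1-r^2)) := by
    calc (∑' k : ℕ, (‖a (k+1)‖)^2 * r ^ (2*(k+1)))
        ≤ ∑' k : ℕ, (L^2 * r^2) * (r^2) ^ k := Summable.tsum_le_tsum hterm2le hsum2 hgeo2
      _ = (L^2 * r^2) * (1 - r^2)⁻¹ := by
          rw [tsum_mul_left, tsum_geometric_of_lt_one hr20 hr2]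
      _ = L^2 * (r^2 / (1-r^2)) := by rw [div_eq_mul_inv]; ring
  -- |f z - f 0|
  have hshift : HasSum (fun k : ℕ => a (k+1) * z ^ (k+1)) (f z - a 0) := by
    have h1 := (hasSum_nat_add_iff' (f := fun n => a n * z ^ n) 1).mpr (hf z hzmem)
    simpa using h1
  have hnormeq : (fun k : ℕ => ‖a (k+1) * z ^ (k+1)‖) = fun k => ‖a (k+1)‖ * r ^ (k+1) := by
    funext k
    rw [norm_mul, norm_pow]
  have hdiff_le : ‖f z - f 0‖ ≤ ∑' k : ℕ, ‖a (k+1)‖ * r ^ (k+1) := by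
    rw [hf0, ← hshift.tsum_eq]
    have h2 : Summable fun k : ℕ => ‖a (k+1) * z ^ (k+1)‖ := by rw [hnormeq]; exact hsum1
    have h3 := norm_tsum_le_tsum_norm h2
    rw [hnormeq] at h3
    exact h3
  -- coefficient nonneg
  have hApos : (0:ℝ) < 1 + A := by linarith
  have hcpos : 0 ≤ 1/(1+A) + r/(1-r) := by
    have : (0:ℝ) < 1 - r := by linarith
    positivity
  have hfinal := final_ineq A r hA0 hA1 hr0 hz
  have hchain : ‖f z - f 0‖ + ‖f 0‖ +
      (∑' n : ℕ, ‖a (n + 1)‖ * r ^ (n + 1)) +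
      (1 / (1 + A) + r / (1 - r)) * (∑' n : ℕ, (‖a (n + 1)‖)^2 * r ^ (2*(n + 1)))
      ≤ L * (r / (1-r)) + A + L * (r / (1-r)) +
        (1 / (1 + A) + r / (1 - r)) * (L^2 * (r^2 / (1-r^2))) := by
    have hfa : ‖f 0‖ = A := by rw [hf0]
    rw [hfa]
    have h4 : (1 / (1 + A) + r / (1 - r)) * (∑' n : ℕ, (‖a (n + 1)‖)^2 * r ^ (2*(n + 1)))
        ≤ (1 / (1 + A) + r / (1 - r)) * (L^2 * (r^2 / (1-r^2))) :=
      mul_le_mul_of_nonneg_left hS2 hcpos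
    have h5 := hdiff_le.trans hS1
    linarith
  calc ‖f z - f 0‖ + ‖f 0‖ +
      (∑' n : ℕ, ‖a (n + 1)‖ * r ^ (n + 1)) +
      (1 / (1 + A) + r / (1 - r)) * (∑' n : ℕ, (‖a (n + 1)‖)^2 * r ^ (2*(n + 1)))
      ≤ L * (r / (1-r)) + A + L * (r / (1-r)) +
        (1 / (1 + A) + r / (1 - r)) * (L^2 * (r^2 / (1-r^2))) := hchain
    _ ≤ 1 := by rw [hLdef]; linarith [hfinal]
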